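/- Let α be a reduced word of ω with tower decomposition a_1 … a_k. If for some i, fin(a_i) < in(a_{i+1}), then in(a_{i+1}) − fin(a_i) ≥ 2, and the word obtained from α by swapping the letters fin(a_i) and in(a_{i+1}) is a reduced word of ω strictly greater than α in the directed-braid order; hence a maximal element of the directed-braid poset satisfies fin(a_i) > in(a_{i+1}) for all i. -/

import Mathlib

/-- The adjacent transposition `sᵢ = (i, i+1)` as a permutation of `ℕ`. -/
def sGen (i : ℕ) : Equiv.Perm ℕ := Equiv.swap i (i + 1)

/-- The permutation represented by a word. -/
def toPerm (w : List ℕ) : Equiv.Perm ℕ := (w.map sGen).prod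

/-- A word is reduced (of minimal length among words representing the same permutation). -/
def IsReducedWord (w : List ℕ) : Prop := ∀ v : List ℕ, toPerm v = toPerm w → w.length ≤ v.length

/-- `w` is a reduced word for the permutation `ω`. -/
def IsReducedWordOf (w : List ℕ) (ω : Equiv.Perm ℕ) : Prop :=
  toPerm w = ω ∧ ∀ v : List ℕ, toPerm v = ω → w.length ≤ v.length

/-- The relation `<₁`: `β` is obtained from `α` by swapping two adjacent letters
`x, y` with `y ≥ x + 2` (the smaller letter moves right). -/
def Rel1 (α β : List ℕ) : Prop :=
  ∃ (p q : List ℕ) (x y : ℕ), x + 2 ≤ y ∧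
    α = p ++ x :: y :: q ∧ β = p ++ y :: x :: q

/-- Lexicographic order (non-strict) on words. -/
def LexLe (α β : List ℕ) : Prop := α = β ∨ List.Lex (· < ·) α β

/-- A tower word: a nonempty increasing run of consecutive integers. -/
def IsTowerWord (a : List ℕ) : Prop := a ≠ [] ∧ a.Chain' (fun x y => y = x + 1)

/-- First letter of a tower word. -/
def inn (a : List ℕ) : ℕ := a.headI

/-- Last letter of a tower word. -/
def fin' (a : List ℕ) : ℕ := a.getLastD 0

/-- `L` is the tower decomposition of `w`: a factorization into maximal tower words. -/
def IsTowerDecomp (w : List ℕ) (L : List (List ℕ)) : Prop :=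
  L.flatten = w ∧ (∀ a ∈ L, IsTowerWord a) ∧
    L.Chain' (fun a b => inn b ≠ fin' a + 1)

/-- The relation `<₂`: a directed long-braid move of a tower word past its left neighbour. -/
def Rel2 (α β : List ℕ) : Prop :=
  ∃ (A B : List (List ℕ)) (a b b1 b2 : List ℕ),
    IsTowerDecomp α (A ++ a :: b :: B) ∧
    inn a ≤ inn b ∧ inn b < fin' b ∧ fin' b < fin' a ∧
    IsTowerWord b1 ∧ (b2 = [] ∨ IsTowerWord b2) ∧ b1 ++ b2 = b ∧
    β = A.flatten ++ (b1.map (· + 1)) ++ a ++ b2 ++ B.flatten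

/-- The directed-braid order: reflexive-transitive closure of `<₁ ∪ <₂`. -/
def DBraid : List ℕ → List ℕ → Prop :=
  Relation.ReflTransGen (fun α β => Rel1 α β ∨ Rel2 α β)

/-- The natural word of `ω`: the reduced word whose tower decomposition has
strictly decreasing initial letters. -/
def IsNaturalWordOf (η : List ℕ) (ω : Equiv.Perm ℕ) : Prop :=
  IsReducedWordOf η ω ∧ ∃ L, IsTowerDecomp η L ∧ L.Chain' (fun a b => inn b < inn a)

/-- A natural basic word of `ω`: a reduced word whose tower decomposition satisfies
`fin(aᵢ) > in(aᵢ₊₁)` for all `i`. -/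
def IsNaturalBasicOf (β : List ℕ) (ω : Equiv.Perm ℕ) : Prop :=
  IsReducedWordOf β ω ∧ ∃ L, IsTowerDecomp β L ∧ L.Chain' (fun a b => inn b < fin' a)

/-- One step of the track of a letter `b` through a tower word `a`. -/
def trackStep (a : List ℕ) (b : ℕ) : Option ℕ :=
  if inn a < b ∧ b ≤ fin' a then some (b - 1)
  else if b + 2 ≤ inn a ∨ fin' a + 2 ≤ b then some b
  else none

/-- The track sequence of `b` through a list of tower words. -/
def trackSeq : ℕ → List (List ℕ) → List ℕ
  | b, [] => [b]
  | b, a :: rest =>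
    match trackStep a b with
    | none => [b]
    | some b' => b :: trackSeq b' rest

/-- The tower decomposition of a word, as a function. -/
def towerDecomp : List ℕ → List (List ℕ)
  | [] => []
  | x :: xs =>
    match towerDecomp xs with
    | [] => [[x]]
    | t :: ts => if t.headI = x + 1 then (x :: t) :: ts else [x] :: t :: ts

lemma sGen_comm {x y : ℕ} (h : x + 2 ≤ y) : sGen x * sGen y = sGen y * sGen x := by
  unfold sGen
  ext n
  simp only [Equiv.Perm.mul_apply, Equiv.swap_apply_def]
  split_ifs <;> omega

lemma toPerm_swap (p q : List ℕ) {x y : ℕ} (h : x + 2 ≤ y) :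
    toPerm (p ++ y :: x :: q) = toPerm (p ++ x :: y :: q) := by
  simp only [toPerm, List.map_append, List.prod_append, List.map_cons, List.prod_cons]
  congr 1
  rw [← mul_assoc, ← mul_assoc, sGen_comm h]

lemma toPerm_dup (p q : List ℕ) (x : ℕ) :
    toPerm (p ++ x :: x :: q) = toPerm (p ++ q) := by
  simp only [toPerm, List.map_append, List.prod_append, List.map_cons, List.prod_cons]
  rw [← mul_assoc (sGen x), show sGen x * sGen x = 1 from Equiv.swap_mul_self x (x+1), one_mul]

lemma tower_split {a : List ℕ} (ha : IsTowerWord a) :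
    a = a.dropLast ++ [fin' a] := by
  obtain ⟨hne, -⟩ := ha
  have := List.dropLast_append_getLast hne
  rw [show fin' a = a.getLast hne by
    simp [fin', List.getLastD_eq_getLast?, List.getLast?_eq_getLast hne]]
  exact this.symm

lemma tower_head {b : List ℕ} (hb : IsTowerWord b) :
    b = inn b :: b.tail := by
  obtain ⟨hne, -⟩ := hb
  cases b with
  | nil => exact absurd rfl hne
  | cons x xs => rfl

lemma decomp_eq {α : List ℕ} {A B : List (List ℕ)} {a b : List ℕ}
    (h : IsTowerDecomp α (A ++ a :: b :: B)) :
    α = (A.flatten ++ a.dropLast) ++ fin' a :: inn b :: (b.tail ++ B.flatten) ∧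
    inn b ≠ fin' a + 1 := by
  obtain ⟨hflat, htw, hchain⟩ := h
  have ha : IsTowerWord a := htw a (by simp)
  have hb : IsTowerWord b := htw b (by simp)
  constructor
  · conv_lhs => rw [← hflat]
    rw [List.flatten_append, List.flatten_cons, List.flatten_cons]
    conv_lhs => rw [tower_split ha, tower_head hb]
    simp
  · simp only [List.Chain', List.isChain_append] at hchain
    have := hchain.2.1
    rw [List.isChain_cons_cons] at this
    exact this.1

/-- if `fin(aᵢ) < in(aᵢ₊₁)` at some tower-word boundary of a reduced word α,
then the gap is at least 2 and swapping these two letters gives a reduced word of ω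
strictly greater than α in the directed-braid order; hence a maximal element of the
directed-braid poset satisfies `fin(aᵢ) > in(aᵢ₊₁)` at every boundary. -/
theorem boundary_swap_and_maximal (ω : Equiv.Perm ℕ) (α : List ℕ)
    (hα : IsReducedWordOf α ω) :
    (∀ (A B : List (List ℕ)) (a b : List ℕ),
      IsTowerDecomp α (A ++ a :: b :: B) → fin' a < inn b →
        fin' a + 2 ≤ inn b ∧
        Rel1 α (A.flatten ++ a.dropLast ++ inn b :: fin' a :: b.tail ++ B.flatten) ∧
        IsReducedWordOf (A.flatten ++ a.dropLast ++ inn b :: fin' a :: b.tail ++ B.flatten) ω) ∧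
    ((∀ γ : List ℕ, IsReducedWordOf γ ω → DBraid α γ → γ = α) →
      ∀ (A B : List (List ℕ)) (a b : List ℕ),
        IsTowerDecomp α (A ++ a :: b :: B) → inn b < fin' a) := by
  have key : ∀ (A B : List (List ℕ)) (a b : List ℕ),
      IsTowerDecomp α (A ++ a :: b :: B) → fin' a < inn b →
        fin' a + 2 ≤ inn b ∧
        Rel1 α (A.flatten ++ a.dropLast ++ inn b :: fin' a :: b.tail ++ B.flatten) ∧
        IsReducedWordOf (A.flatten ++ a.dropLast ++ inn b :: fin' a :: b.tail ++ B.flatten) ω := by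
    intro A B a b hdec hlt
    obtain ⟨heq, hne⟩ := decomp_eq hdec
    have hx2 : fin' a + 2 ≤ inn b := by omega
    have hβ : (A.flatten ++ a.dropLast ++ inn b :: fin' a :: b.tail ++ B.flatten : List ℕ) =
        (A.flatten ++ a.dropLast) ++ inn b :: fin' a :: (b.tail ++ B.flatten) := by
      simp
    have hrel : Rel1 α (A.flatten ++ a.dropLast ++ inn b :: fin' a :: b.tail ++ B.flatten) :=
      ⟨A.flatten ++ a.dropLast, b.tail ++ B.flatten, fin' a, inn b, hx2, heq, hβ⟩
    have hperm : toPerm (A.flatten ++ a.dropLast ++ inn b :: fin' a :: b.tail ++ B.flatten) = ω := by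
      rw [hβ, toPerm_swap _ _ hx2, ← heq, hα.1]
    have hlen : (A.flatten ++ a.dropLast ++ inn b :: fin' a :: b.tail ++ B.flatten).length
        = α.length := by
      rw [hβ, heq]; simp
    exact ⟨hx2, hrel, hperm, fun v hv => hlen ▸ hα.2 v hv⟩
  refine ⟨key, ?_⟩
  intro hmax A B a b hdec
  by_contra hnot
  push_neg at hnot
  obtain ⟨heq, hne⟩ := decomp_eq hdec
  rcases lt_or_eq_of_le hnot with hlt | heqv
  · obtain ⟨hx2, hrel, hred⟩ := key A B a b hdec hlt
    have hβα := hmax _ hred (Relation.ReflTransGen.single (Or.inl hrel))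
    rw [heq] at hβα
    have : (A.flatten ++ a.dropLast ++ inn b :: fin' a :: b.tail ++ B.flatten : List ℕ) =
        (A.flatten ++ a.dropLast) ++ inn b :: fin' a :: (b.tail ++ B.flatten) := by simp
    rw [this] at hβα
    have := List.append_cancel_left hβα
    simp only [List.cons.injEq] at this
    omega
  · have hdup : α = (A.flatten ++ a.dropLast) ++ fin' a :: fin' a :: (b.tail ++ B.flatten) := by
      rw [heq, heqv]
    have hperm : toPerm ((A.flatten ++ a.dropLast) ++ (b.tail ++ B.flatten)) = ω := by
      rw [← toPerm_dup _ _ (fin' a), ← hdup, hα.1]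
    have hle := hα.2 _ hperm
    rw [hdup] at hle
    simp [List.length_append] at hle
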